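/- Let A be a complex matrix with singular value decomposition A = Σᵢ ξᵢ |v_lⁱ⟩⟨v_rⁱ|, and let g(x) = Σ_{i=0}^{d} cᵢ xⁱ be a real polynomial with g(0) = 0 and |g(x)| ≤ 1 for all x ∈ [−1,1], such that |g(x) − 1/(2κx)| ≤ ε/(2κ) for all x ∈ [−1,1] with |x| ≥ 1/κ. If every nonzero singular value ξᵢ of A satisfies 1/κ ≤ ξᵢ ≤ 1, then ‖A⁺ − 2κ·g(A)‖ ≤ ε, where g(A) := Σᵢ g(ξᵢ)|v_lⁱ⟩⟨v_rⁱ| (for d odd) and A⁺ is the Moore–Penrose pseudoinverse, and ‖·‖ is the operator norm. -/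

import Mathlib

open Matrix Polynomial

/-- The outer product `|u⟩⟨v|` as a matrix. -/
def outer {m n : Type*} (u : m → ℂ) (v : n → ℂ) : Matrix m n ℂ :=
  Matrix.vecMulVec u (star v)

/-- The `ℓ²`-operator (spectral) norm of a complex matrix. -/
noncomputable def opNorm {m n : Type*} [Fintype m] [Fintype n] [DecidableEq n]
    (A : Matrix m n ℂ) : ℝ :=
  ‖LinearMap.toContinuousLinearMap (Matrix.toEuclideanLin A)‖

/-- If `A = Σᵢ ξᵢ |v_lⁱ⟩⟨v_rⁱ|` is an SVD, and `g` is a real polynomial with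
`g(0) = 0`, `|g| ≤ 1` on `[-1,1]`, `|g(x) − 1/(2κx)| ≤ ε/(2κ)` for `1/κ ≤ |x| ≤ 1`, and
every nonzero singular value lies in `[1/κ, 1]`, then `‖A⁺ − 2κ·g(A)‖ ≤ ε`, where the
singular value transformation `g(A)` is compared entrywise on singular values with
`1/(2κξᵢ)` and `A⁺` is the Moore–Penrose pseudoinverse. -/
lemma mulVec_outer {m n : Type*} [Fintype n] (u : m → ℂ) (v : n → ℂ) (w : n → ℂ) :
    outer u v *ᵥ w = (star v ⬝ᵥ w) • u := by
  funext j
  simp only [outer, vecMulVec, mulVec, dotProduct, Pi.smul_apply, smul_eq_mul,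
    Finset.sum_mul, of_apply, Pi.star_apply, RCLike.star_def]
  exact Finset.sum_congr rfl fun k _ => by ring

lemma sum_mulVec {ι m n : Type*} [Fintype n] (s : Finset ι) (M : ι → Matrix m n ℂ)
    (w : n → ℂ) : (∑ i ∈ s, M i) *ᵥ w = ∑ i ∈ s, M i *ᵥ w := by
  funext j
  simp only [mulVec, dotProduct, Matrix.sum_apply, Finset.sum_mul]
  rw [Finset.sum_comm]
  simp [mulVec, dotProduct]

lemma key {ι m' m : Type*} [Fintype ι] [DecidableEq ι] [Fintype m'] [Fintype m]
    [DecidableEq m'] [DecidableEq m]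
    (vl : ι → m' → ℂ) (vr : ι → m → ℂ)
    (hvl : ∀ i j, star (vl i) ⬝ᵥ vl j = if i = j then (1 : ℂ) else 0)
    (hvr : ∀ i j, star (vr i) ⬝ᵥ vr j = if i = j then (1 : ℂ) else 0)
    (c : ι → ℂ) (ε : ℝ) (hε : 0 ≤ ε) (hc : ∀ i, ‖c i‖ ≤ ε) :
    opNorm (∑ i, c i • outer (vr i) (vl i)) ≤ ε := by
  set Vl : ι → EuclideanSpace ℂ m' := fun i => (WithLp.equiv 2 (m' → ℂ)).symm (vl i)
  set Vr : ι → EuclideanSpace ℂ m := fun i => (WithLp.equiv 2 (m → ℂ)).symm (vr i)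
  have oVl : Orthonormal ℂ Vl := by
    rw [orthonormal_iff_ite]
    intro i j
    exact (EuclideanSpace.inner_toLp_toLp (vl i) (vl j)).trans ((dotProduct_comm _ _).trans (hvl i j))
  have oVr : Orthonormal ℂ Vr := by
    rw [orthonormal_iff_ite]
    intro i j
    exact (EuclideanSpace.inner_toLp_toLp (vr i) (vr j)).trans ((dotProduct_comm _ _).trans (hvr i j))
  apply ContinuousLinearMap.opNorm_le_bound _ hε
  intro x
  have hTx : (LinearMap.toContinuousLinearMap
      (Matrix.toEuclideanLin (∑ i, c i • outer (vr i) (vl i)))) x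
      = ∑ i, (c i * inner ℂ (Vl i) x) • Vr i := by
    show Matrix.toEuclideanLin _ x = _
    simp only [Matrix.toEuclideanLin_apply, _root_.sum_mulVec, Matrix.smul_mulVec,
      mulVec_outer, smul_smul]
    rw [WithLp.toLp_sum]
    refine Finset.sum_congr rfl fun i _ => ?_
    rw [WithLp.toLp_smul]
    congr 2
    exact dotProduct_comm _ _
  rw [hTx]
  have hnorm : ‖∑ i, (c i * inner ℂ (Vl i) x) • Vr i‖ ^ 2
      = ∑ i, ‖c i * inner ℂ (Vl i) x‖ ^ 2 := by
    have := oVr.inner_sum (fun i => c i * inner ℂ (Vl i) x) (fun i => c i * inner ℂ (Vl i) x)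
      Finset.univ
    rw [@norm_sq_eq_re_inner ℂ, this]
    simp only [RCLike.conj_mul]
    norm_cast
  have bessel : ∑ i, ‖(inner ℂ (Vl i) x : ℂ)‖ ^ 2 ≤ ‖x‖ ^ 2 :=
    oVl.sum_inner_products_le x
  have hsum : ∑ i, ‖c i * inner ℂ (Vl i) x‖ ^ 2 ≤ ε ^ 2 * ‖x‖ ^ 2 := by
    calc ∑ i, ‖c i * inner ℂ (Vl i) x‖ ^ 2
        ≤ ∑ i, ε ^ 2 * ‖(inner ℂ (Vl i) x : ℂ)‖ ^ 2 := by
          apply Finset.sum_le_sum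
          intro i _
          rw [norm_mul, mul_pow]
          apply mul_le_mul_of_nonneg_right _ (by positivity)
          exact pow_le_pow_left₀ (norm_nonneg _) (hc i) 2
      _ = ε ^ 2 * ∑ i, ‖(inner ℂ (Vl i) x : ℂ)‖ ^ 2 := by rw [Finset.mul_sum]
      _ ≤ ε ^ 2 * ‖x‖ ^ 2 := by
          exact mul_le_mul_of_nonneg_left bessel (by positivity)
  have hfin : ‖∑ i, (c i * inner ℂ (Vl i) x) • Vr i‖ ^ 2 ≤ (ε * ‖x‖) ^ 2 := by
    rw [hnorm]; calc _ ≤ ε ^ 2 * ‖x‖ ^ 2 := hsum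
      _ = (ε * ‖x‖) ^ 2 := by ring
  nlinarith [norm_nonneg (∑ i, (c i * inner ℂ (Vl i) x) • Vr i), norm_nonneg x,
    mul_nonneg hε (norm_nonneg x)]


theorem stmt_1 (ι m' m : Type*) [Fintype ι] [DecidableEq ι]
    [Fintype m'] [Fintype m] [DecidableEq m'] [DecidableEq m]
    (ξ : ι → ℝ) (vl : ι → m' → ℂ) (vr : ι → m → ℂ)
    (hvl : ∀ i j, star (vl i) ⬝ᵥ vl j = if i = j then (1 : ℂ) else 0)
    (hvr : ∀ i j, star (vr i) ⬝ᵥ vr j = if i = j then (1 : ℂ) else 0)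
    (hξnonneg : ∀ i, 0 ≤ ξ i)
    (A : Matrix m' m ℂ) (hA : A = ∑ i, (ξ i : ℂ) • outer (vl i) (vr i))
    (κ ε : ℝ) (hκ : 1 < κ) (hε : 0 < ε) (hε' : ε < 1 / 2)
    (g : Polynomial ℝ) (hg0 : g.eval 0 = 0)
    (hgbound : ∀ x ∈ Set.Icc (-1 : ℝ) 1, |g.eval x| ≤ 1)
    (hgapprox : ∀ x ∈ Set.Icc (-1 : ℝ) 1, 1 / κ ≤ |x| →
      |g.eval x - 1 / (2 * κ * x)| ≤ ε / (2 * κ))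
    (hξ : ∀ i, ξ i ≠ 0 → 1 / κ ≤ ξ i ∧ ξ i ≤ 1)
    (Apinv gA : Matrix m m' ℂ)
    (hApinv : Apinv = ∑ i, (if ξ i = 0 then 0 else ((ξ i)⁻¹ : ℂ)) • outer (vr i) (vl i))
    (hgA : gA = ∑ i, ((g.eval (ξ i) : ℝ) : ℂ) • outer (vr i) (vl i)) :
    opNorm (Apinv - (2 * κ : ℂ) • gA) ≤ ε := by
  subst hApinv hgA hA
  have hrw : (∑ i, (if ξ i = 0 then 0 else ((ξ i)⁻¹ : ℂ)) • outer (vr i) (vl i))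
      - (2 * κ : ℂ) • ∑ i, ((g.eval (ξ i) : ℝ) : ℂ) • outer (vr i) (vl i)
      = ∑ i, ((if ξ i = 0 then 0 else ((ξ i)⁻¹ : ℂ))
          - (2 * κ : ℂ) * ((g.eval (ξ i) : ℝ) : ℂ)) • outer (vr i) (vl i) := by
    rw [Finset.smul_sum, ← Finset.sum_sub_distrib]
    congr 1
    funext i
    rw [sub_smul, smul_smul]
  rw [hrw]
  apply key vl vr hvl hvr _ ε hε.le
  intro i
  by_cases h : ξ i = 0
  · simp [h, hg0, hε.le]
  · obtain ⟨h1, h2⟩ := hξ i h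
    have hκ0 : (0 : ℝ) < κ := by linarith
    have hξpos : 0 < ξ i := lt_of_lt_of_le (by positivity) h1
    have hx : ξ i ∈ Set.Icc (-1 : ℝ) 1 := ⟨by linarith, h2⟩
    have habs : 1 / κ ≤ |ξ i| := by rwa [abs_of_pos hξpos]
    have happ := hgapprox _ hx habs
    have hcast : (if ξ i = 0 then 0 else ((ξ i)⁻¹ : ℂ))
        - (2 * κ : ℂ) * ((g.eval (ξ i) : ℝ) : ℂ)
        = (((ξ i)⁻¹ - 2 * κ * g.eval (ξ i) : ℝ) : ℂ) := by
      rw [if_neg h]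
      push_cast
      ring
    rw [hcast, Complex.norm_real, Real.norm_eq_abs]
    have hfact : (ξ i)⁻¹ - 2 * κ * g.eval (ξ i)
        = (2 * κ) * (1 / (2 * κ * ξ i) - g.eval (ξ i)) := by
      field_simp
    rw [hfact, abs_mul, abs_sub_comm, abs_of_pos (by positivity : (0:ℝ) < 2 * κ)]
    calc 2 * κ * |g.eval (ξ i) - 1 / (2 * κ * ξ i)| ≤ 2 * κ * (ε / (2 * κ)) :=
          mul_le_mul_of_nonneg_left happ (by positivity)
      _ = ε := by field_simp
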